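/- arXiv:1910.11531 — 4 statements merged into one kernel-verified Lean document; each statement's English description precedes it below -/
import Mathlib

section
/- Let E, F be real Banach spaces, U ⊆ E open, f : U → F differentiable on U, and x₀ ∈ U. If Df : U → L(E,F) is continuous at x₀, then there exists a two-variable slope function Φ : U × U → L(E,F) of f (for each x, Φ(x,·) is a slope function at x) which is jointly continuous at (x₀, x₀). -/
open Set Filter Topology

/-- If `Df` is continuous at `x₀`, then there exists a two-variable slope
function of `f` that is jointly continuous at `(x₀, x₀)` (with limit `Df(x₀)`). -/
theorem stmt_11 {E F : Type*} [NormedAddCommGroup E] [NormedSpace ℝ E] [CompleteSpace E]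
    [NormedAddCommGroup F] [NormedSpace ℝ F] [CompleteSpace F]
    (U : Set E) (hU : IsOpen U) (f : E → F) (f' : E → (E →L[ℝ] F))
    (hf : ∀ c ∈ U, HasFDerivAt f (f' c) c)
    (x₀ : E) (hx₀ : x₀ ∈ U)
    (hcont : ContinuousAt f' x₀) :
    ∃ Φ : E → E → (E →L[ℝ] F),
      (∀ x ∈ U, ∀ y ∈ U, f y = f x + Φ x y (y - x)) ∧
      (∀ x ∈ U, ContinuousAt (Φ x) x) ∧
      (∀ x ∈ U, Φ x x = f' x) ∧
      Tendsto (fun p : E × E => Φ p.1 p.2) (𝓝 (x₀, x₀)) (𝓝 (f' x₀)) := by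
  classical
  set Φ : E → E → (E →L[ℝ] F) := fun x y =>
    if h : y = x then f' x
    else ((exists_dual_vector ℝ (y - x) (norm_ne_zero_iff.2 (sub_ne_zero.2 h))).choose).smulRight
        (‖y - x‖⁻¹ • (f y - f x - f' x (y - x))) + f' x with hΦ
  have hdiag : ∀ x, Φ x x = f' x := fun x => by simp [hΦ]
  -- key norm identity
  have key : ∀ x y, y ≠ x →
      ‖Φ x y - f' x‖ = ‖y - x‖⁻¹ * ‖f y - f x - f' x (y - x)‖ := by
    intro x y h
    have hspec := (exists_dual_vector ℝ (y - x) (norm_ne_zero_iff.2 (sub_ne_zero.2 h))).choose_spec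
    simp only [hΦ, dif_neg h, add_sub_cancel_right]
    rw [ContinuousLinearMap.norm_smulRight_apply, hspec.1, one_mul, norm_smul,
      norm_inv, norm_norm]
  -- slope identity
  have hid : ∀ x y, f y = f x + Φ x y (y - x) := by
    intro x y
    by_cases h : y = x
    · subst h; simp [hdiag]
    · have hspec := (exists_dual_vector ℝ (y - x) (norm_ne_zero_iff.2 (sub_ne_zero.2 h))).choose_spec
      have hne : ‖y - x‖ ≠ 0 := norm_ne_zero_iff.2 (sub_ne_zero.2 h)
      simp only [hΦ, dif_neg h, ContinuousLinearMap.add_apply,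
        ContinuousLinearMap.smulRight_apply, hspec.2]
      rw [smul_smul, RCLike.ofReal_real_eq_id, id_eq, mul_inv_cancel₀ hne, one_smul]
      abel
  refine ⟨Φ, fun x _ y _ => hid x y, ?_, fun x _ => hdiag x, ?_⟩
  · -- continuity of Φ x at x
    intro x hx
    rw [ContinuousAt, hdiag]
    rw [Metric.tendsto_nhds]
    intro ε hε
    have hlo := (hf x hx).isLittleO
    have := hlo.def (by positivity : (0:ℝ) < ε/2)
    filter_upwards [this] with y hy
    rw [dist_eq_norm]
    by_cases h : y = x
    · subst h; rw [hdiag, sub_self, norm_zero]; exact hε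
    · rw [key x y h]
      have hne : (0:ℝ) < ‖y - x‖ := norm_pos_iff.2 (sub_ne_zero.2 h)
      have hy' : ‖f y - f x - f' x (y - x)‖ ≤ ε/2 * ‖y - x‖ := by simpa using hy
      calc ‖y - x‖⁻¹ * ‖f y - f x - f' x (y - x)‖
          ≤ ‖y - x‖⁻¹ * (ε/2 * ‖y - x‖) := by gcongr
        _ = ε/2 := by field_simp
        _ < ε := by linarith
  · -- joint continuity at (x₀, x₀)
    rw [Metric.tendsto_nhds]
    intro ε hε
    have hε4 : (0:ℝ) < ε/4 := by positivity
    obtain ⟨δ₁, hδ₁, hball⟩ := Metric.isOpen_iff.1 hU x₀ hx₀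
    obtain ⟨δ₂, hδ₂, hfc⟩ := Metric.continuousAt_iff.1 hcont (ε/4) hε4
    set δ := min δ₁ δ₂ with hδdef
    have hδ : 0 < δ := lt_min hδ₁ hδ₂
    have hBU : Metric.ball x₀ δ ⊆ U :=
      (Metric.ball_subset_ball (min_le_left _ _)).trans hball
    have hBd : ∀ z ∈ Metric.ball x₀ δ, ‖f' z - f' x₀‖ ≤ ε/4 := by
      intro z hz
      have : dist z x₀ < δ₂ := lt_of_lt_of_le hz (min_le_right _ _)
      have := hfc this
      rw [dist_eq_norm] at this
      exact this.le
    -- MVT bound on the ball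
    have hmvt : ∀ x ∈ Metric.ball x₀ δ, ∀ y ∈ Metric.ball x₀ δ,
        ‖f y - f x - f' x₀ (y - x)‖ ≤ ε/4 * ‖y - x‖ := by
      intro x hxB y hyB
      have hconv : Convex ℝ (Metric.ball x₀ δ) := convex_ball x₀ δ
      have := hconv.norm_image_sub_le_of_norm_hasFDerivWithin_le
        (f := fun z => f z - f' x₀ z) (f' := fun z => f' z - f' x₀)
        (fun z hz => ((hf z (hBU hz)).sub ((f' x₀).hasFDerivAt)).hasFDerivWithinAt)
        (fun z hz => hBd z hz) hxB hyB
      calc ‖f y - f x - f' x₀ (y - x)‖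
          = ‖(f y - f' x₀ y) - (f x - f' x₀ x)‖ := by rw [map_sub]; abel_nf
        _ ≤ ε/4 * ‖y - x‖ := this
    have hmem : (Metric.ball x₀ δ ×ˢ Metric.ball x₀ δ) ∈ 𝓝 (x₀, x₀) :=
      prod_mem_nhds (Metric.ball_mem_nhds _ hδ) (Metric.ball_mem_nhds _ hδ)
    filter_upwards [hmem] with p hp
    obtain ⟨x, y⟩ := p
    obtain ⟨hp1, hp2⟩ := hp
    rw [dist_eq_norm]
    have htri : ‖Φ x y - f' x₀‖ ≤ ‖Φ x y - f' x‖ + ‖f' x - f' x₀‖ := by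
      have : Φ x y - f' x₀ = (Φ x y - f' x) + (f' x - f' x₀) := by abel
      rw [this]; exact norm_add_le _ _
    have h2 : ‖f' x - f' x₀‖ ≤ ε/4 := hBd x hp1
    by_cases h : y = x
    · rw [h, hdiag]
      exact lt_of_le_of_lt h2 (by linarith)
    · have hne : (0:ℝ) < ‖y - x‖ := norm_pos_iff.2 (sub_ne_zero.2 h)
      have h1 : ‖Φ x y - f' x‖ ≤ ε/2 := by
        rw [key x y h]
        have hbound : ‖f y - f x - f' x (y - x)‖ ≤ ε/2 * ‖y - x‖ := by
          have e1 : f y - f x - f' x (y - x)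
              = (f y - f x - f' x₀ (y - x)) + (f' x₀ - f' x) (y - x) := by
            simp only [ContinuousLinearMap.sub_apply]; abel
          calc ‖f y - f x - f' x (y - x)‖
              ≤ ‖f y - f x - f' x₀ (y - x)‖ + ‖(f' x₀ - f' x) (y - x)‖ := by
                rw [e1]; exact norm_add_le _ _
            _ ≤ ε/4 * ‖y - x‖ + ‖f' x₀ - f' x‖ * ‖y - x‖ := by
                have h3 := hmvt x hp1 y hp2
                have h4 := (f' x₀ - f' x).le_opNorm (y - x)
                gcongr
            _ ≤ ε/4 * ‖y - x‖ + ε/4 * ‖y - x‖ := by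
                have h5 : ‖f' x₀ - f' x‖ ≤ ε/4 := by rw [norm_sub_rev]; exact hBd x hp1
                gcongr
            _ = ε/2 * ‖y - x‖ := by ring
        calc ‖y - x‖⁻¹ * ‖f y - f x - f' x (y - x)‖
            ≤ ‖y - x‖⁻¹ * (ε/2 * ‖y - x‖) := by gcongr
          _ = ε/2 := by field_simp
      calc ‖Φ x y - f' x₀‖ ≤ ε/2 + ε/4 := by linarith [htri]
        _ < ε := by linarith
end

section
/- Under the hypotheses of the Schwarz lemma proof: for f differentiable near x with Df differentiable at x, and u, v ∈ E fixed, the second-order difference quotient converges: lim_{s→0+} (f(x+su+sv) - f(x+sv) - f(x+su) + f(x))/s² = D²f(x)[u,v]. -/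
open Set Filter Topology Asymptotics

/-- Convergence of the second-order difference quotient to `D²f(x)[u,v]`. -/
theorem stmt_14 {E F : Type*} [NormedAddCommGroup E] [NormedSpace ℝ E] [CompleteSpace E]
    [NormedAddCommGroup F] [NormedSpace ℝ F] [CompleteSpace F]
    (U : Set E) (hU : IsOpen U) (f : E → F) (f' : E → (E →L[ℝ] F))
    (x : E) (hx : x ∈ U)
    (hf : ∀ y ∈ U, HasFDerivAt f (f' y) y)
    (f'' : E →L[ℝ] (E →L[ℝ] F)) (hf'' : HasFDerivAt f' f'' x)
    (u v : E) :
    Tendsto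
      (fun s : ℝ => (s ^ 2)⁻¹ • (f (x + s • u + s • v) - f (x + s • v) - f (x + s • u) + f x))
      (𝓝[>] 0) (𝓝 (f'' u v)) := by
  -- choose a ball around `x` inside `U`
  obtain ⟨r, rpos, hball⟩ := Metric.isOpen_iff.1 hU x hx
  set s0 : Set E := Metric.ball x r with hs0
  have s_conv : Convex ℝ s0 := convex_ball x r
  have hint : interior s0 = s0 := (Metric.isOpen_ball).interior_eq
  have hf1 : ∀ y ∈ interior s0, HasFDerivAt f (f' y) y := by
    intro y hy
    exact hf y (hball (hint ▸ hy))
  have xs : x ∈ s0 := Metric.mem_ball_self rpos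
  have hx2 : HasFDerivWithinAt f' f'' (interior s0) x := hf''.hasFDerivWithinAt
  -- choose a small scaling factor `t`
  set t : ℝ := r / (2 * (‖u‖ + ‖v‖ + 1)) with ht
  have hden : (0:ℝ) < 2 * (‖u‖ + ‖v‖ + 1) := by positivity
  have tpos : 0 < t := div_pos rpos hden
  have htu : t * ‖u‖ < r := by
    rw [ht, div_mul_eq_mul_div, div_lt_iff₀ hden]
    nlinarith [norm_nonneg u, norm_nonneg v, rpos]
  have htuv : t * (‖u‖ + ‖v‖) < r := by
    rw [ht, div_mul_eq_mul_div, div_lt_iff₀ hden]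
    nlinarith [norm_nonneg u, norm_nonneg v, rpos]
  have htv : t * ‖v‖ < r := by
    rw [ht, div_mul_eq_mul_div, div_lt_iff₀ hden]
    nlinarith [norm_nonneg u, norm_nonneg v, rpos]
  have h1 : x + t • u ∈ interior s0 := by
    rw [hint, hs0, Metric.mem_ball]
    simpa [dist_eq_norm, norm_smul, abs_of_pos tpos] using htu
  have h2 : x + t • u + t • v ∈ interior s0 := by
    rw [hint, hs0, Metric.mem_ball]
    have : ‖x + t • u + t • v - x‖ ≤ t * ‖u‖ + t * ‖v‖ := by
      have : x + t • u + t • v - x = t • u + t • v := by abel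
      rw [this]
      calc ‖t • u + t • v‖ ≤ ‖t • u‖ + ‖t • v‖ := norm_add_le _ _
        _ = t * ‖u‖ + t * ‖v‖ := by
            simp [norm_smul, abs_of_pos tpos]
    rw [dist_eq_norm]
    calc ‖x + t • u + t • v - x‖ ≤ t * ‖u‖ + t * ‖v‖ := this
      _ = t * (‖u‖ + ‖v‖) := by ring
      _ < r := htuv
  have h3 : x + (0:E) ∈ interior s0 := by simpa [hint] using xs
  have h4 : x + (0:E) + t • v ∈ interior s0 := by
    rw [hint, hs0, Metric.mem_ball]
    simpa [dist_eq_norm, norm_smul, abs_of_pos tpos] using htv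
  -- Taylor approximations along the two segments
  have TA := s_conv.taylor_approx_two_segment hf1 xs hx2 h1 h2
  have TB := s_conv.taylor_approx_two_segment hf1 xs hx2 h3 h4
  -- compose with the map s ↦ s / t
  have hmap : Tendsto (fun s : ℝ => s / t) (𝓝[>] (0:ℝ)) (𝓝[>] (0:ℝ)) := by
    apply tendsto_nhdsWithin_of_tendsto_nhds_of_eventually_within
    · have h0 : Tendsto (fun s : ℝ => s / t) (𝓝 (0:ℝ)) (𝓝 (0 / t)) :=
        tendsto_id.div_const t
      rw [zero_div] at h0
      exact h0.mono_left nhdsWithin_le_nhds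
    · filter_upwards [self_mem_nhdsWithin] with s hs
      exact div_pos hs tpos
  have tne : t ≠ 0 := ne_of_gt tpos
  have key : ∀ (h : ℝ),
      (h / t) • (t • u) = h • u ∧ (h / t) • (t • v) = h • v := by
    intro h
    constructor <;> rw [smul_smul, div_mul_cancel₀ _ tne]
  have hsq : ∀ h : ℝ, (h / t) ^ 2 = h ^ 2 / t ^ 2 := fun h => div_pow h t 2
  -- rewrite TA composed
  have A2 := TA.comp_tendsto hmap
  have B2 := TB.comp_tendsto hmap
  have A3 : (fun h : ℝ => f (x + h • u + h • v) - f (x + h • u) - h • f' x v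
      - h ^ 2 • f'' u v - (h ^ 2 / 2) • f'' v v) =o[𝓝[>] (0:ℝ)] fun h => h ^ 2 := by
    have : (fun h : ℝ => f (x + h • u + h • v) - f (x + h • u) - h • f' x v
        - h ^ 2 • f'' u v - (h ^ 2 / 2) • f'' v v) =
        fun h : ℝ => ((fun h : ℝ => f (x + h • (t • u) + h • (t • v))
          - f (x + h • (t • u)) - h • f' x (t • v) - h ^ 2 • f'' (t • u) (t • v)
          - (h ^ 2 / 2) • f'' (t • v) (t • v)) ∘ (fun s => s / t)) h := by
      funext h
      simp only [Function.comp_apply, (key h).1, (key h).2]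
      have e1 : (h / t) • f' x (t • v) = h • f' x v := by
        rw [map_smul, smul_smul, div_mul_cancel₀ _ tne]
      have e2 : (h / t) ^ 2 • f'' (t • u) (t • v) = h ^ 2 • f'' u v := by
        simp only [map_smul, ContinuousLinearMap.smul_apply, smul_smul]
        congr 1
        field_simp
        try tauto
      have e3 : ((h / t) ^ 2 / 2) • f'' (t • v) (t • v) = (h ^ 2 / 2) • f'' v v := by
        simp only [map_smul, ContinuousLinearMap.smul_apply, smul_smul]
        congr 1
        field_simp
        try tauto
      rw [e1, e2, e3]
    rw [this]
    refine A2.trans_isBigO ?_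
    have : ((fun h : ℝ => h ^ 2) ∘ fun s => s / t) = fun h : ℝ => h ^ 2 / t ^ 2 := by
      funext h; exact hsq h
    rw [this]
    exact (isBigO_const_mul_self (1 / t ^ 2) (fun h : ℝ => h ^ 2) _).congr_left
      (fun h => by field_simp)
  have B3 : (fun h : ℝ => f (x + h • v) - f x - h • f' x v
      - (h ^ 2 / 2) • f'' v v) =o[𝓝[>] (0:ℝ)] fun h => h ^ 2 := by
    have : (fun h : ℝ => f (x + h • v) - f x - h • f' x v - (h ^ 2 / 2) • f'' v v) =
        fun h : ℝ => ((fun h : ℝ => f (x + h • (0:E) + h • (t • v))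
          - f (x + h • (0:E)) - h • f' x (t • v) - h ^ 2 • f'' (0:E) (t • v)
          - (h ^ 2 / 2) • f'' (t • v) (t • v)) ∘ (fun s => s / t)) h := by
      funext h
      simp only [Function.comp_apply, (key h).2, smul_zero, add_zero, map_zero,
        ContinuousLinearMap.zero_apply, sub_zero]
      have e1 : (h / t) • f' x (t • v) = h • f' x v := by
        rw [map_smul, smul_smul, div_mul_cancel₀ _ tne]
      have e3 : ((h / t) ^ 2 / 2) • f'' (t • v) (t • v) = (h ^ 2 / 2) • f'' v v := by
        simp only [map_smul, ContinuousLinearMap.smul_apply, smul_smul]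
        congr 1
        field_simp
        try tauto
      rw [e1, e3]
    rw [this]
    refine B2.trans_isBigO ?_
    have : ((fun h : ℝ => h ^ 2) ∘ fun s => s / t) = fun h : ℝ => h ^ 2 / t ^ 2 := by
      funext h; exact hsq h
    rw [this]
    exact (isBigO_const_mul_self (1 / t ^ 2) (fun h : ℝ => h ^ 2) _).congr_left
      (fun h => by field_simp)
  -- subtract
  have C : (fun h : ℝ => (f (x + h • u + h • v) - f (x + h • v) - f (x + h • u) + f x)
      - h ^ 2 • f'' u v) =o[𝓝[>] (0:ℝ)] fun h => h ^ 2 := by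
    have := A3.sub B3
    refine this.congr_left fun h => ?_
    abel
  -- conclude the limit
  set φ : ℝ → F := fun h => (f (x + h • u + h • v) - f (x + h • v) - f (x + h • u) + f x)
    - h ^ 2 • f'' u v with hφ
  have hquot : Tendsto (fun h : ℝ => (h ^ 2)⁻¹ • φ h) (𝓝[>] (0:ℝ)) (𝓝 0) := by
    have hnorm := C.norm_left.tendsto_div_nhds_zero
    apply squeeze_zero_norm _ hnorm
    intro h
    rw [norm_smul, norm_inv, Real.norm_eq_abs, abs_pow, sq_abs, div_eq_inv_mul]
  have final := hquot.add_const (f'' u v)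
  rw [zero_add] at final
  refine final.congr' ?_
  filter_upwards [self_mem_nhdsWithin] with h hh
  have h2ne : (h:ℝ) ^ 2 ≠ 0 := pow_ne_zero 2 (ne_of_gt hh)
  rw [hφ]
  simp only [smul_sub, smul_smul, inv_mul_cancel₀ h2ne, one_smul]
  abel
end

section
/- Differentiable dependence of fixed points: Let E, F be Banach spaces, U ⊆ E and Λ ⊆ F open nonempty, and f : closure(U) × Λ → closure(U) continuously differentiable and a uniform contraction with constant L ∈ (0,1) in the first variable. For each μ ∈ Λ let x_μ ∈ closure(U) be the unique fixed point of f(·,μ). Then the map μ ↦ x_μ is continuously differentiable on Λ, with derivative at λ given by D(x_·)(λ) = [I - D_x f(x_λ, λ)]⁻¹ ∘ D_λ f(x_λ, λ), where I - D_x f(x_λ,λ) is invertible since ‖D_x f(x_λ,λ)‖ ≤ L < 1. -/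
open Set Filter Topology ContinuousLinearMap

/-- Differentiable dependence of fixed points: if `g` is `C¹` on an open set
containing `closure U ×ˢ Λ` and a uniform contraction in the first variable,
then `μ ↦ x_μ` is continuously differentiable on `Λ` with derivative
`(I - D_x g(x_μ, μ))⁻¹ ∘ D_λ g(x_μ, μ)` (the inverse exists since
`‖D_x g(x_μ,μ)‖ ≤ L < 1`). -/
theorem stmt_17 {E F : Type*} [NormedAddCommGroup E] [NormedSpace ℝ E] [CompleteSpace E]
    [NormedAddCommGroup F] [NormedSpace ℝ F] [CompleteSpace F]
    (U : Set E) (hU : IsOpen U) (hUne : U.Nonempty)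
    (Λ : Set F) (hΛ : IsOpen Λ) (hΛne : Λ.Nonempty)
    (W : Set (E × F)) (hW : IsOpen W) (hWsub : (closure U) ×ˢ Λ ⊆ W)
    (g : E × F → E) (hg : ContDiffOn ℝ 1 g W)
    (hmaps : ∀ x ∈ closure U, ∀ μ ∈ Λ, g (x, μ) ∈ closure U)
    (L : ℝ) (hL0 : 0 < L) (hL1 : L < 1)
    (hcontr : ∀ μ ∈ Λ, ∀ x ∈ closure U, ∀ y ∈ closure U,
      ‖g (x, μ) - g (y, μ)‖ ≤ L * ‖x - y‖)
    (xfix : F → E)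
    (hfix : ∀ μ ∈ Λ, xfix μ ∈ closure U ∧ g (xfix μ, μ) = xfix μ) :
    (∀ μ ∈ Λ, ‖(fderiv ℝ g (xfix μ, μ)).comp (inl ℝ E F)‖ ≤ L) ∧
    (∀ μ ∈ Λ, IsUnit (1 - (fderiv ℝ g (xfix μ, μ)).comp (inl ℝ E F))) ∧
    (∀ μ ∈ Λ, HasFDerivAt xfix
      ((Ring.inverse (1 - (fderiv ℝ g (xfix μ, μ)).comp (inl ℝ E F))).comp
        ((fderiv ℝ g (xfix μ, μ)).comp (inr ℝ E F))) μ) ∧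
    ContinuousOn (fun μ =>
      (Ring.inverse (1 - (fderiv ℝ g (xfix μ, μ)).comp (inl ℝ E F))).comp
        ((fderiv ℝ g (xfix μ, μ)).comp (inr ℝ E F))) Λ := by
  have hW' : ∀ μ ∈ Λ, ∀ x ∈ closure U, (x, μ) ∈ W := fun μ hμ x hx => hWsub ⟨hx, hμ⟩
  have hdg : ∀ p ∈ W, HasFDerivAt g (fderiv ℝ g p) p := fun p hp =>
    ((hg.differentiableOn one_ne_zero).differentiableAt (hW.mem_nhds hp)).hasFDerivAt
  have hcf : ContinuousOn (fderiv ℝ g) W := by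
    have := hg.continuousOn_fderiv_of_isOpen hW le_rfl
    exact this
  -- Part 1
  have part1 : ∀ μ ∈ Λ, ‖(fderiv ℝ g (xfix μ, μ)).comp (inl ℝ E F)‖ ≤ L := by
    intro μ hμ
    have hUb : ∀ y ∈ U, ‖(fderiv ℝ g (y, μ)).comp (inl ℝ E F)‖ ≤ L := by
      intro y hy
      have hyW : (y, μ) ∈ W := hW' μ hμ y (subset_closure hy)
      have h1 : HasFDerivAt (fun x => g (x, μ)) ((fderiv ℝ g (y, μ)).comp (inl ℝ E F)) y :=
        (hdg _ hyW).comp y (hasFDerivAt_prodMk_left y μ)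
      refine h1.le_of_lip' hL0.le ?_
      filter_upwards [hU.mem_nhds hy] with x hx
      exact hcontr μ hμ x (subset_closure hx) y (subset_closure hy)
    -- pass to the closure point `xfix μ` by continuity
    have hxW : (xfix μ, μ) ∈ W := hW' μ hμ _ (hfix μ hμ).1
    have hca : ContinuousAt (fun y : E => ‖(fderiv ℝ g (y, μ)).comp (inl ℝ E F)‖) (xfix μ) := by
      have h1 : ContinuousAt (fun y : E => fderiv ℝ g (y, μ)) (xfix μ) :=
        (hcf.continuousAt (hW.mem_nhds hxW)).comp
          (f := fun y : E => ((y, μ) : E × F))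
          ((continuous_id.prodMk continuous_const).continuousAt)
      have h2 : ContinuousAt (fun y : E => (fderiv ℝ g (y, μ)).comp (inl ℝ E F)) (xfix μ) :=
        (((compL ℝ E (E × F) E).flip (inl ℝ E F)).continuous.continuousAt).comp
          (g := fun T : (E × F) →L[ℝ] E => T.comp (inl ℝ E F)) h1
      exact continuous_norm.continuousAt.comp
        (g := fun T : E →L[ℝ] E => ‖T‖) h2
    haveI hne : (𝓝[U] (xfix μ)).NeBot :=
      mem_closure_iff_nhdsWithin_neBot.1 (hfix μ hμ).1
    refine le_of_tendsto ((hca.continuousWithinAt (s := U)).tendsto) ?_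
    filter_upwards [self_mem_nhdsWithin] with y hy using hUb y hy
  -- Part 2
  have part2 : ∀ μ ∈ Λ, IsUnit (1 - (fderiv ℝ g (xfix μ, μ)).comp (inl ℝ E F)) := by
    intro μ hμ
    exact ⟨Units.oneSub _ (lt_of_le_of_lt (part1 μ hμ) hL1), rfl⟩
  -- Part 3
  have part3 : ∀ μ ∈ Λ, HasFDerivAt xfix
      ((Ring.inverse (1 - (fderiv ℝ g (xfix μ, μ)).comp (inl ℝ E F))).comp
        ((fderiv ℝ g (xfix μ, μ)).comp (inr ℝ E F))) μ := by
    intro μ₀ hμ₀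
    obtain ⟨hx₀U, hfx₀⟩ := hfix μ₀ hμ₀
    set x₀ := xfix μ₀ with hx₀def
    set Dg := fderiv ℝ g (x₀, μ₀) with hDgdef
    set A := Dg.comp (inl ℝ E F) with hAdef
    set B := Dg.comp (inr ℝ E F) with hBdef
    set N := Ring.inverse (1 - A) with hNdef
    have hA : IsUnit (1 - A) := part2 μ₀ hμ₀
    have hDg : HasFDerivAt g Dg (x₀, μ₀) := hdg _ (hW' μ₀ hμ₀ x₀ hx₀U)
    have hev : ∀ᶠ μ in 𝓝 μ₀, μ ∈ Λ := hΛ.eventually_mem hμ₀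
    have hsplit : ∀ a : E, ∀ b : F, Dg (a, b) = A a + B b := by
      intro a b
      have : ((a, b) : E × F) = (a, 0) + (0, b) := by simp
      rw [this, map_add]
      simp [hAdef, hBdef]
    -- local big-O bound for `xfix μ - x₀`
    have hgμ : HasFDerivAt (fun μ => g (x₀, μ)) B μ₀ :=
      hDg.comp μ₀ (hasFDerivAt_prodMk_right x₀ μ₀)
    have hO1 : (fun μ => g (x₀, μ) - g (x₀, μ₀)) =O[𝓝 μ₀] (fun μ => μ - μ₀) :=
      hgμ.isBigO_sub
    have hO2 : (fun μ => xfix μ - x₀) =O[𝓝 μ₀] (fun μ => g (x₀, μ) - g (x₀, μ₀)) := by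
      rw [Asymptotics.isBigO_iff]
      refine ⟨(1 - L)⁻¹, ?_⟩
      filter_upwards [hev] with μ hμ
      have hsplit2 : xfix μ - x₀ = (g (xfix μ, μ) - g (x₀, μ)) + (g (x₀, μ) - g (x₀, μ₀)) := by
        rw [(hfix μ hμ).2, hfx₀]; abel
      have h2 : ‖g (xfix μ, μ) - g (x₀, μ)‖ ≤ L * ‖xfix μ - x₀‖ :=
        hcontr μ hμ _ (hfix μ hμ).1 x₀ hx₀U
      have h3 : ‖xfix μ - x₀‖ ≤ L * ‖xfix μ - x₀‖ + ‖g (x₀, μ) - g (x₀, μ₀)‖ := by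
        calc ‖xfix μ - x₀‖ ≤ ‖g (xfix μ, μ) - g (x₀, μ)‖ + ‖g (x₀, μ) - g (x₀, μ₀)‖ := by
              rw [hsplit2]; exact norm_add_le _ _
          _ ≤ L * ‖xfix μ - x₀‖ + ‖g (x₀, μ) - g (x₀, μ₀)‖ := by linarith
      rw [inv_mul_eq_div, le_div_iff₀ (by linarith)]
      nlinarith [norm_nonneg (xfix μ - x₀)]
    have hO : (fun μ => xfix μ - x₀) =O[𝓝 μ₀] (fun μ => μ - μ₀) := hO2.trans hO1
    have htend : Tendsto xfix (𝓝 μ₀) (𝓝 x₀) := by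
      have h0 : Tendsto (fun μ : F => μ - μ₀) (𝓝 μ₀) (𝓝 0) :=
        tendsto_sub_nhds_zero_iff.2 tendsto_id
      have h1 : Tendsto (fun μ => xfix μ - x₀) (𝓝 μ₀) (𝓝 0) := hO.trans_tendsto h0
      have h2 := h1.add (tendsto_const_nhds (x := x₀))
      simpa using h2
    have hpair : Tendsto (fun μ => ((xfix μ, μ) : E × F)) (𝓝 μ₀) (𝓝 (x₀, μ₀)) :=
      htend.prodMk_nhds tendsto_id
    -- little-o estimate from differentiability of g
    have he0 : (fun p : E × F => g p - g (x₀, μ₀) - Dg (p - (x₀, μ₀)))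
        =o[𝓝 (x₀, μ₀)] (fun p => p - (x₀, μ₀)) := hDg.isLittleO
    have he : (fun μ => g (xfix μ, μ) - g (x₀, μ₀) - Dg ((xfix μ, μ) - (x₀, μ₀)))
        =o[𝓝 μ₀] (fun μ => ((xfix μ, μ) : E × F) - (x₀, μ₀)) := he0.comp_tendsto hpair
    have hpairO : (fun μ => ((xfix μ, μ) : E × F) - (x₀, μ₀)) =O[𝓝 μ₀] (fun μ => μ - μ₀) := by
      have : (fun μ => ((xfix μ, μ) : E × F) - (x₀, μ₀))
          = fun μ => ((xfix μ - x₀, μ - μ₀) : E × F) := by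
        funext μ; rfl
      rw [this]
      exact hO.prod_left (Asymptotics.isBigO_refl _ _)
    have hE : (fun μ => g (xfix μ, μ) - g (x₀, μ₀) - Dg ((xfix μ, μ) - (x₀, μ₀)))
        =o[𝓝 μ₀] (fun μ => μ - μ₀) := he.trans_isBigO hpairO
    have hNE : (fun μ => N (g (xfix μ, μ) - g (x₀, μ₀) - Dg ((xfix μ, μ) - (x₀, μ₀))))
        =o[𝓝 μ₀] (fun μ => μ - μ₀) :=
      (N.isBigO_comp _ _).trans_isLittleO hE
    refine HasFDerivAt.of_isLittleO (hNE.congr' ?_ EventuallyEq.rfl)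
    filter_upwards [hev] with μ hμ
    have hfxμ : g (xfix μ, μ) = xfix μ := (hfix μ hμ).2
    have hNA : ∀ v : E, N ((1 - A) v) = v := by
      intro v
      have : N * (1 - A) = 1 := Ring.inverse_mul_cancel _ hA
      calc N ((1 - A) v) = (N * (1 - A)) v := rfl
        _ = v := by rw [this]; rfl
    have hsub : ((xfix μ, μ) : E × F) - (x₀, μ₀) = (xfix μ - x₀, μ - μ₀) := rfl
    rw [hfxμ, hfx₀, hsub, hsplit]
    have : xfix μ - x₀ - (A (xfix μ - x₀) + B (μ - μ₀))
        = (1 - A) (xfix μ - x₀) - B (μ - μ₀) := by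
      simp [ContinuousLinearMap.sub_apply, ContinuousLinearMap.one_apply]
      abel
    rw [this, map_sub, hNA]
    rfl
  refine ⟨part1, part2, part3, ?_⟩
  -- Part 4 : continuity of the derivative
  have hxc : ContinuousOn xfix Λ := fun μ hμ =>
    (part3 μ hμ).continuousAt.continuousWithinAt
  have hDc : ContinuousOn (fun μ => fderiv ℝ g (xfix μ, μ)) Λ := by
    refine hcf.comp (hxc.prodMk (continuousOn_id)) ?_
    intro μ hμ
    exact hW' μ hμ _ (hfix μ hμ).1
  have hAc : ContinuousOn (fun μ => (fderiv ℝ g (xfix μ, μ)).comp (inl ℝ E F)) Λ :=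
    (((compL ℝ E (E × F) E).flip (inl ℝ E F)).continuous.comp_continuousOn hDc)
  have hBc : ContinuousOn (fun μ => (fderiv ℝ g (xfix μ, μ)).comp (inr ℝ E F)) Λ :=
    (((compL ℝ F (E × F) E).flip (inr ℝ E F)).continuous.comp_continuousOn hDc)
  have hNc : ContinuousOn
      (fun μ => Ring.inverse (1 - (fderiv ℝ g (xfix μ, μ)).comp (inl ℝ E F))) Λ := by
    intro μ hμ
    have h1 : ContinuousWithinAt
        (fun μ => 1 - (fderiv ℝ g (xfix μ, μ)).comp (inl ℝ E F)) Λ μ :=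
      (continuousWithinAt_const).sub (hAc μ hμ)
    obtain ⟨u, hu⟩ := part2 μ hμ
    have h2 : ContinuousAt Ring.inverse (1 - (fderiv ℝ g (xfix μ, μ)).comp (inl ℝ E F)) := by
      rw [← hu]; exact NormedRing.inverse_continuousAt u
    exact h2.comp_continuousWithinAt
      (f := fun μ => 1 - (fderiv ℝ g (xfix μ, μ)).comp (inl ℝ E F)) h1
  exact hNc.clm_comp hBc
end

section
/- Separately continuous slope function in finite dimensions: Let f : U → ℝ^m be differentiable on an open set U ⊆ ℝ^n (with the Euclidean norm). For distinct x, y ∈ U (with suitable points remaining in U), set v₁ := (y-x)/‖y-x‖ and extend to an orthonormal basis (v₁,…,vₙ) of ℝ^n, and define Φ(x,y) ∈ L(ℝ^n, ℝ^m) by Φ(x,y)v_k := (f(x + ‖y-x‖v_k) - f(x))/‖y-x‖, with Φ(x,x) := Df(x). Then Φ(x,y)(y-x) = f(y) - f(x), and Φ is separately continuous at every diagonal point: for each x, Φ(x,y) → Df(x) as y → x, and for each y, Φ(x,y) → Df(y) as x → y. -/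
open Set Filter Topology

lemma coord_le_norm {n : ℕ} (u : EuclideanSpace ℝ (Fin n)) (k : Fin n) : |u k| ≤ ‖u‖ := by
  rw [EuclideanSpace.norm_eq]
  have : |u k| = Real.sqrt (‖u k‖ ^ 2) := by
    rw [Real.norm_eq_abs, Real.sqrt_sq_eq_abs, abs_abs]
  rw [this]
  apply Real.sqrt_le_sqrt
  exact Finset.single_le_sum (f := fun i => ‖u i‖ ^ 2) (fun i _ => sq_nonneg _) (Finset.mem_univ k)

lemma opnorm_le_of_orthonormal {n m : ℕ} [NeZero n] {v : Fin n → EuclideanSpace ℝ (Fin n)}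
    (hv : Orthonormal ℝ v) (A : EuclideanSpace ℝ (Fin n) →L[ℝ] EuclideanSpace ℝ (Fin m))
    {C : ℝ} (hC : 0 ≤ C) (h : ∀ k, ‖A (v k)‖ ≤ C) : ‖A‖ ≤ n * C := by
  have card_eq : Fintype.card (Fin n) = Module.finrank ℝ (EuclideanSpace ℝ (Fin n)) := by
    simp [finrank_euclideanSpace_fin]
  set b0 := basisOfOrthonormalOfCardEqFinrank hv card_eq with hb0
  have hcoe : (b0 : Fin n → EuclideanSpace ℝ (Fin n)) = v :=
    coe_basisOfOrthonormalOfCardEqFinrank hv card_eq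
  have hON : Orthonormal ℝ (b0 : Fin n → EuclideanSpace ℝ (Fin n)) := hcoe ▸ hv
  set b := b0.toOrthonormalBasis hON with hb
  have hbcoe : (b : Fin n → EuclideanSpace ℝ (Fin n)) = v := by
    rw [hb, Module.Basis.coe_toOrthonormalBasis, hcoe]
  apply A.opNorm_le_bound (by positivity)
  intro u
  have hrepr : ∑ k, b.repr u k • b k = u := b.sum_repr u
  calc ‖A u‖ = ‖∑ k, b.repr u k • A (b k)‖ := by
        conv_lhs => rw [← hrepr]
        rw [map_sum]
        simp only [map_smul]
    _ ≤ ∑ k, ‖b.repr u k • A (b k)‖ := norm_sum_le _ _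
    _ ≤ ∑ k : Fin n, C * ‖u‖ := by
        apply Finset.sum_le_sum
        intro k _
        rw [norm_smul, Real.norm_eq_abs]
        have h1 : |b.repr u k| ≤ ‖u‖ := by
          have := coord_le_norm (b.repr u) k
          rwa [b.repr.norm_map u] at this
        have h2 : ‖A (b k)‖ ≤ C := by rw [show b k = v k from congrFun hbcoe k]; exact h k
        calc |b.repr u k| * ‖A (b k)‖ ≤ ‖u‖ * C :=
              mul_le_mul h1 h2 (norm_nonneg _) (norm_nonneg _)
          _ = C * ‖u‖ := mul_comm _ _
    _ = n * C * ‖u‖ := by simp [Finset.sum_const, mul_assoc]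

/-- A separately continuous slope function in finite dimensions: given, for each
pair of distinct points `x, y`, an orthonormal basis `v x y` of `ℝⁿ` with first
vector `(y-x)/‖y-x‖`, and `Φ` defined by
`Φ x y (v x y k) = (f (x + ‖y-x‖ • v x y k) - f x)/‖y-x‖` (with `Φ x x = Df x`),
`Φ` satisfies the slope identity and is separately continuous at every diagonal
point of `U`. -/
theorem stmt_18 {n m : ℕ} (hn : 0 < n)
    (U : Set (EuclideanSpace ℝ (Fin n))) (hU : IsOpen U)
    (f : EuclideanSpace ℝ (Fin n) → EuclideanSpace ℝ (Fin m))
    (f' : EuclideanSpace ℝ (Fin n) →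
      (EuclideanSpace ℝ (Fin n) →L[ℝ] EuclideanSpace ℝ (Fin m)))
    (hf : ∀ c ∈ U, HasFDerivAt f (f' c) c)
    (v : EuclideanSpace ℝ (Fin n) → EuclideanSpace ℝ (Fin n) →
      Fin n → EuclideanSpace ℝ (Fin n))
    (hvON : ∀ x y, x ≠ y → Orthonormal ℝ (v x y))
    (hv1 : ∀ x y, x ≠ y → v x y ⟨0, hn⟩ = ‖y - x‖⁻¹ • (y - x))
    (Φ : EuclideanSpace ℝ (Fin n) → EuclideanSpace ℝ (Fin n) →
      (EuclideanSpace ℝ (Fin n) →L[ℝ] EuclideanSpace ℝ (Fin m)))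
    (hΦdef : ∀ x y, x ≠ y → ∀ k : Fin n,
      Φ x y (v x y k) = ‖y - x‖⁻¹ • (f (x + ‖y - x‖ • v x y k) - f x))
    (hΦdiag : ∀ x, Φ x x = f' x) :
    (∀ x y, Φ x y (y - x) = f y - f x) ∧
    (∀ x ∈ U, Tendsto (fun y => Φ x y) (𝓝 x) (𝓝 (f' x))) ∧
    (∀ y ∈ U, Tendsto (fun x => Φ x y) (𝓝 y) (𝓝 (f' y))) := by
  haveI : NeZero n := ⟨hn.ne'⟩
  refine ⟨?_, ?_, ?_⟩
  · -- slope identity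
    intro x y
    by_cases hxy : x = y
    · subst hxy; simp
    · have ht : 0 < ‖y - x‖ := by
        rw [norm_pos_iff, sub_ne_zero]; exact Ne.symm hxy
      have h1 : y - x = ‖y - x‖ • v x y ⟨0, hn⟩ := by
        rw [hv1 x y hxy, smul_smul, mul_inv_cancel₀ ht.ne', one_smul]
      calc Φ x y (y - x) = Φ x y (‖y - x‖ • v x y ⟨0, hn⟩) := by rw [← h1]
        _ = ‖y - x‖ • Φ x y (v x y ⟨0, hn⟩) := map_smul _ _ _
        _ = ‖y - x‖ • ‖y - x‖⁻¹ • (f (x + ‖y - x‖ • v x y ⟨0, hn⟩) - f x) := by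
            rw [hΦdef x y hxy]
        _ = f (x + (y - x)) - f x := by
            rw [smul_smul, mul_inv_cancel₀ ht.ne', one_smul, ← h1]
        _ = f y - f x := by rw [add_sub_cancel]
  · -- continuity in y
    intro x hx
    rw [Metric.tendsto_nhds]
    intro ε hε
    set δ : ℝ := ε / (n + 1) with hδdef
    have hδ : 0 < δ := by positivity
    have hnδ : (n : ℝ) * δ < ε := by
      rw [hδdef]
      rw [div_eq_mul_inv, ← mul_assoc]
      rw [mul_inv_lt_iff₀ (by positivity)]
      nlinarith [hε]
    have hlo := ((hf x hx).isLittleO).def hδ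
    obtain ⟨r, hr, hball⟩ := Metric.eventually_nhds_iff.1 hlo
    apply Metric.eventually_nhds_iff.2
    refine ⟨r, hr, fun y hyx => ?_⟩
    rw [dist_eq_norm]
    by_cases hxy : x = y
    · subst hxy; rw [hΦdiag, sub_self, norm_zero]; exact hε
    · set t := ‖y - x‖ with htdef
      clear_value t
      have ht : 0 < t := by
        rw [htdef, norm_pos_iff, sub_ne_zero]; exact Ne.symm hxy
      have htr : t < r := by
        rw [htdef, ← dist_eq_norm]; exact hyx
      have hbd : ∀ k, ‖(Φ x y - f' x) (v x y k)‖ ≤ δ := by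
        intro k
        have hvk : ‖v x y k‖ = 1 := (hvON x y hxy).1 k
        set z := x + t • v x y k with hzdef
        clear_value z
        have hz : z - x = t • v x y k := by rw [hzdef]; abel
        have hzx : ‖z - x‖ = t := by
          rw [hz, norm_smul, Real.norm_eq_abs, abs_of_pos ht, hvk, mul_one]
        have hzb : dist z x < r := by rw [dist_eq_norm, hzx]; exact htr
        have herr := hball hzb
        rw [ContinuousLinearMap.sub_apply, hΦdef x y hxy k, ← htdef, ← hzdef]
        have key : t⁻¹ • (f z - f x) - f' x (v x y k)
            = t⁻¹ • (f z - f x - f' x (z - x)) := by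
          rw [hz, map_smul,
            smul_sub t⁻¹ (f z - f x) (t • (f' x) (v x y k)),
            smul_smul, inv_mul_cancel₀ ht.ne', one_smul]
        rw [key, norm_smul, Real.norm_eq_abs, abs_of_pos (inv_pos.2 ht)]
        calc t⁻¹ * ‖f z - f x - f' x (z - x)‖ ≤ t⁻¹ * (δ * ‖z - x‖) := by
              apply mul_le_mul_of_nonneg_left herr (by positivity)
          _ = δ := by rw [hzx]; field_simp
      calc ‖Φ x y - f' x‖ ≤ n * δ :=
            opnorm_le_of_orthonormal (hvON x y hxy) _ hδ.le hbd
        _ < ε := hnδ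
  · -- continuity in x
    intro y hy
    rw [Metric.tendsto_nhds]
    intro ε hε
    set δ : ℝ := ε / (3 * (n + 1)) with hδdef
    have hδ : 0 < δ := by positivity
    have hnδ : (n : ℝ) * (3 * δ) < ε := by
      rw [hδdef]
      rw [div_eq_mul_inv]
      rw [show (n : ℝ) * (3 * (ε * (3 * (↑n + 1))⁻¹)) = (3 * n) * ε * (3 * (↑n + 1))⁻¹ by ring]
      rw [mul_inv_lt_iff₀ (by positivity)]
      nlinarith [hε]
    have hlo := ((hf y hy).isLittleO).def hδ
    obtain ⟨r, hr, hball⟩ := Metric.eventually_nhds_iff.1 hlo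
    apply Metric.eventually_nhds_iff.2
    refine ⟨r / 2, by positivity, fun x hxy2 => ?_⟩
    rw [dist_eq_norm]
    by_cases hxy : x = y
    · subst hxy; rw [hΦdiag, sub_self, norm_zero]; exact hε
    · set t := ‖y - x‖ with htdef
      clear_value t
      have ht : 0 < t := by
        rw [htdef, norm_pos_iff, sub_ne_zero]; exact Ne.symm hxy
      have htr : t < r / 2 := by
        rw [htdef, norm_sub_rev, ← dist_eq_norm]; exact hxy2
      have hbd : ∀ k, ‖(Φ x y - f' y) (v x y k)‖ ≤ 3 * δ := by
        intro k
        have hvk : ‖v x y k‖ = 1 := (hvON x y hxy).1 k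
        set z := x + t • v x y k with hzdef
        clear_value z
        have hz : z - x = t • v x y k := by rw [hzdef]; abel
        have hzy : ‖z - y‖ ≤ 2 * t := by
          calc ‖z - y‖ = ‖(z - x) + (x - y)‖ := by abel_nf
            _ ≤ ‖z - x‖ + ‖x - y‖ := norm_add_le _ _
            _ = 2 * t := by
                rw [hz, norm_smul, Real.norm_eq_abs, abs_of_pos ht, hvk, mul_one,
                  ← norm_neg (x - y), neg_sub, ← htdef]; ring
        have hxyn : ‖x - y‖ = t := by rw [← norm_neg (x - y), neg_sub, ← htdef]
        have herrz := hball (show dist z y < r by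
          rw [dist_eq_norm]; linarith [hzy, htr])
        have herrx := hball (show dist x y < r by
          rw [dist_eq_norm, hxyn]; linarith [htr, hr])
        rw [ContinuousLinearMap.sub_apply, hΦdef x y hxy k, ← htdef, ← hzdef]
        have key : t⁻¹ • (f z - f x) - f' y (v x y k)
            = t⁻¹ • ((f z - f y - f' y (z - y)) - (f x - f y - f' y (x - y))) := by
          have h2 : (f z - f y - f' y (z - y)) - (f x - f y - f' y (x - y))
              = f z - f x - f' y (z - x) := by
            simp only [map_sub]
            abel
          rw [h2, hz, map_smul,
            smul_sub t⁻¹ (f z - f x) (t • (f' y) (v x y k)),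
            smul_smul, inv_mul_cancel₀ ht.ne', one_smul]
        rw [key, norm_smul, Real.norm_eq_abs, abs_of_pos (inv_pos.2 ht)]
        have hnorm : ‖(f z - f y - f' y (z - y)) - (f x - f y - f' y (x - y))‖
            ≤ 3 * δ * t := by
          calc ‖(f z - f y - f' y (z - y)) - (f x - f y - f' y (x - y))‖
              ≤ ‖f z - f y - f' y (z - y)‖ + ‖f x - f y - f' y (x - y)‖ := norm_sub_le _ _
            _ ≤ δ * ‖z - y‖ + δ * ‖x - y‖ := add_le_add herrz herrx
            _ ≤ δ * (2 * t) + δ * t := by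
                rw [hxyn]
                exact add_le_add (mul_le_mul_of_nonneg_left hzy hδ.le) le_rfl
            _ = 3 * δ * t := by ring
        calc t⁻¹ * ‖(f z - f y - f' y (z - y)) - (f x - f y - f' y (x - y))‖
            ≤ t⁻¹ * (3 * δ * t) := mul_le_mul_of_nonneg_left hnorm (by positivity)
          _ = 3 * δ := by field_simp
      calc ‖Φ x y - f' y‖ ≤ n * (3 * δ) :=
            opnorm_le_of_orthonormal (hvON x y hxy) _ (by positivity) hbd
        _ < ε := hnδ
end
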